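/- Let a, b ∈ ℝ and let t ∈ ℂ with Im t > 0. Then the symmetric 3×3 complex matrix φ(t) with rows ((t + a²i, (a²−b²)/2 + abi, −b + ai), ((a²−b²)/2 + abi, t + 2ab + b²i, a + bi), (−b + ai, a + bi, i)) has positive definite imaginary part; that is, φ(t) lies in the Siegel upper half-space ℍ₃. -/

import Mathlib

open Complex Matrix

/-- Membership in the Siegel upper half-space: symmetric with positive definite
imaginary part. -/
def SiegelUpper (g : ℕ) (τ : Matrix (Fin g) (Fin g) ℂ) : Prop :=
  τ.IsSymm ∧ (Matrix.of fun j k => (τ j k).im : Matrix (Fin g) (Fin g) ℝ).PosDef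

/-- The period matrix `φ(t)` of the Shimura curve family, for parameters `a, b ∈ ℝ`. -/
noncomputable def phi (a b : ℝ) (t : ℂ) : Matrix (Fin 3) (Fin 3) ℂ :=
  !![t + (a : ℂ)^2 * I, ((a : ℂ)^2 - (b : ℂ)^2)/2 + (a : ℂ)*(b : ℂ)*I, -(b : ℂ) + (a : ℂ)*I;
     ((a : ℂ)^2 - (b : ℂ)^2)/2 + (a : ℂ)*(b : ℂ)*I, t + 2*(a : ℂ)*(b : ℂ) + (b : ℂ)^2 * I,
       (a : ℂ) + (b : ℂ)*I;
     -(b : ℂ) + (a : ℂ)*I, (a : ℂ) + (b : ℂ)*I, I]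

theorem stmt_1 (a b : ℝ) (t : ℂ) (ht : 0 < t.im) :
    SiegelUpper 3 (phi a b t) := by
  constructor
  · ext i j
    fin_cases i <;> fin_cases j <;> simp [phi, Matrix.transpose_apply]
  · rw [Matrix.posDef_iff_dotProduct_mulVec]
    constructor
    · ext i j
      fin_cases i <;> fin_cases j <;>
        simp [phi, Matrix.conjTranspose_apply, Matrix.of_apply]
    · intro x hx
      have hx' : x 0 ≠ 0 ∨ x 1 ≠ 0 ∨ x 2 ≠ 0 := by
        by_contra h
        push_neg at h
        apply hx
        ext i
        fin_cases i <;> simp [h.1, h.2.1, h.2.2]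
      have h2 : (0:ℝ) < t.im * (x 0 ^ 2 + x 1 ^ 2) + (a * x 0 + b * x 1 + x 2)^2 := by
        rcases hx' with h | h | h
        · nlinarith [sq_nonneg (x 0), sq_nonneg (x 1), sq_nonneg (a * x 0 + b * x 1 + x 2), sq_pos_of_ne_zero h]
        · nlinarith [sq_nonneg (x 0), sq_nonneg (x 1), sq_nonneg (a * x 0 + b * x 1 + x 2), sq_pos_of_ne_zero h]
        · rcases eq_or_ne (x 0) 0 with h0 | h0
          · rcases eq_or_ne (x 1) 0 with h1 | h1
            · rw [h0, h1]
              have : a * 0 + b * 0 + x 2 = x 2 := by ring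
              nlinarith [sq_pos_of_ne_zero h]
            · nlinarith [sq_nonneg (x 0), sq_nonneg (a * x 0 + b * x 1 + x 2), sq_pos_of_ne_zero h1]
          · nlinarith [sq_nonneg (x 1), sq_nonneg (a * x 0 + b * x 1 + x 2), sq_pos_of_ne_zero h0]
      simp only [phi, dotProduct, Matrix.mulVec, Fin.sum_univ_three,
        Matrix.of_apply, Matrix.cons_val', Matrix.cons_val_zero, Matrix.cons_val_one,
        Matrix.cons_val_two, Matrix.tail_cons,
        Matrix.head_cons, Matrix.empty_val',
        Matrix.cons_val_fin_one, Pi.star_apply, star_trivial, RCLike.re_to_real]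
      simp only [pow_two, Complex.add_im, Complex.mul_im, Complex.I_im, Complex.I_re,
        Complex.ofReal_re, Complex.ofReal_im, Complex.sub_im, Complex.sub_re,
        Complex.div_im, Complex.div_re, Complex.neg_im, Complex.neg_re,
        Complex.mul_re, Complex.re_ofNat, Complex.im_ofNat, Complex.normSq_ofNat,
        Matrix.vecHead]
      ring_nf
      ring_nf at h2
      nlinarith [h2]
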